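/- Let 𝔖 be an almost-arithmetic cofinite G-semimatroid, let A∈𝒞̲, and let a₁,…,a_k∈E_𝔖 be distinct orbits not in A with rk̲(A∪{a₁,…,a_k})=rk̲(A)+k. Then for every choice of X∈𝒞_A and of representatives x_i∈a_i (i=1,…,k), m_𝔖(A∪{a₁,…,a_k}) = m_𝔖(A) · [Γ(X)×Π_{i=1}^k Γ(x_i) : θ(G)], where Γ(X):=G/stab(X), Γ(x_i):=G/stab(x_i), and θ:G→Γ(X)×Π_i Γ(x_i) is the homomorphism θ(g)=([g]_X,[g]_{x₁},…,[g]_{x_k}) sending g to its classes modulo the respective stabilizers. -/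

import Mathlib

open scoped Classical Pointwise


/-- A finitary semimatroid on the ground set `S`: a nonempty, finite-dimensional
simplicial complex `C` of finite subsets of `S` (containing all singletons), together
with a rank function satisfying (R1)-(R3), (CR1), (CR2). -/
structure FinSemimatroid (S : Type*) [DecidableEq S] where
  C : Set (Finset S)
  rk : Finset S → ℕ
  nonempty : C.Nonempty
  downClosed : ∀ ⦃X Y : Finset S⦄, X ∈ C → Y ⊆ X → Y ∈ C
  singleton_mem : ∀ x : S, ({x} : Finset S) ∈ C
  finDim : ∃ d : ℕ, ∀ X ∈ C, X.card ≤ d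
  r1 : ∀ X ∈ C, rk X ≤ X.card
  r2 : ∀ ⦃X Y : Finset S⦄, X ∈ C → Y ∈ C → X ⊆ Y → rk X ≤ rk Y
  r3 : ∀ ⦃X Y : Finset S⦄, X ∈ C → Y ∈ C → X ∪ Y ∈ C →
    rk (X ∪ Y) + rk (X ∩ Y) ≤ rk X + rk Y
  cr1 : ∀ ⦃X Y : Finset S⦄, X ∈ C → Y ∈ C → rk X = rk (X ∩ Y) → X ∪ Y ∈ C
  cr2 : ∀ ⦃X Y : Finset S⦄, X ∈ C → Y ∈ C → rk X < rk Y →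
    ∃ y ∈ Y, y ∉ X ∧ insert y X ∈ C

namespace FinSemimatroid

variable {S : Type*} [DecidableEq S]

/-- The closure of a central set. -/
def cl (M : FinSemimatroid S) (X : Finset S) : Set S :=
  {y : S | insert y X ∈ M.C ∧ M.rk (insert y X) = M.rk X}

/-- A flat is a closed central set. -/
def IsFlat (M : FinSemimatroid S) (X : Finset S) : Prop :=
  X ∈ M.C ∧ M.cl X = (X : Set S)

/-- The poset of flats, ordered by inclusion. -/
abbrev Flats (M : FinSemimatroid S) : Type _ := {X : Finset S // M.IsFlat X}

/-- A simple finitary semimatroid. -/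
def Simple (M : FinSemimatroid S) : Prop :=
  (∀ x : S, M.rk {x} = 1) ∧
    ∀ x y : S, x ≠ y → ({x, y} : Finset S) ∈ M.C → M.rk {x, y} = 2

end FinSemimatroid

/-- A poset is chain-finite if all its chains are finite. -/
def ChainFinite (L : Type*) [PartialOrder L] : Prop :=
  ∀ c : Set L, IsChain (· ≤ ·) c → c.Finite

/-- An atom of a bounded-below poset: an element covering the minimum. -/
def PosetAtom {L : Type*} [PartialOrder L] (a : L) : Prop :=
  ∃ bot : L, IsBot bot ∧ bot ⋖ a

/-- `L` (with rank function `rk`) is a finite geometric lattice (finite, bounded below,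
a lattice, ranked by `rk`, atomic and semimodular) with at most `N` atoms. -/
def IsFinGeomLatticeAtMost (L : Type*) [PartialOrder L] (rk : L → ℕ) (N : ℕ) : Prop :=
  Finite L ∧
    ∃ bot : L, IsBot bot ∧
      (∀ x y : L, ∃ m : L, IsGLB {x, y} m) ∧
      (∀ x y : L, ∃ j : L, IsLUB {x, y} j) ∧
      (∀ x y : L, x ⋖ y → rk y = rk x + 1) ∧
      (∀ x : L, ∃ A : Set L, (∀ a ∈ A, bot ⋖ a) ∧ IsLUB A x) ∧
      (∀ x y m j : L, IsGLB {x, y} m → IsLUB {x, y} j → rk j + rk m ≤ rk x + rk y) ∧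
      Nat.card {a : L | bot ⋖ a} ≤ N
/-- A `G`-semimatroid: an action of `G` on a finitary semimatroid, preserving
centrality and rank. -/
structure GSemimatroid (G S : Type*) [Group G] [MulAction G S] [DecidableEq S]
    extends FinSemimatroid S where
  smul_mem : ∀ (g : G) ⦃X : Finset S⦄, X ∈ C → X.image (g • ·) ∈ C
  rk_smul : ∀ (g : G) ⦃X : Finset S⦄, X ∈ C → rk (X.image (g • ·)) = rk X

namespace GSemimatroid

variable {G S : Type*} [Group G] [MulAction G S] [DecidableEq S]

/-- The set of orbits `E_𝔖 = S/G`. -/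
abbrev E (G S : Type*) [Group G] [MulAction G S] : Type _ :=
  Quotient (MulAction.orbitRel G S)

/-- The orbit of a point. -/
def orbOf (G : Type*) {S : Type*} [Group G] [MulAction G S] (x : S) : E G S :=
  Quotient.mk (MulAction.orbitRel G S) x

/-- `X̲`: the set of orbits met by `X`. -/
def under (G : Type*) {S : Type*} [Group G] [MulAction G S] (X : Finset S) :
    Set (E G S) :=
  orbOf G '' (X : Set S)

variable (M : GSemimatroid G S)

/-- `𝒞̲ = {X̲ : X ∈ 𝒞}`. -/
def CQ : Set (Set (E G S)) := {A | ∃ X ∈ M.C, under G X = A}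

/-- `rk̲ A = max { rk X : X ∈ 𝒞, X̲ ⊆ A }`. -/
noncomputable def rkQ (A : Set (E G S)) : ℕ :=
  sSup {n : ℕ | ∃ X ∈ M.C, under G X ⊆ A ∧ M.rk X = n}

/-- `𝒞_A`: the central sets lying over `A`. -/
def CA (A : Set (E G S)) : Set (Finset S) := {X | X ∈ M.C ∧ under G X = A}

/-- The type of central sets. -/
abbrev Cen : Type _ := {X : Finset S // X ∈ M.C}

/-- The `G`-orbit relation on central sets. -/
def cenRel (X Y : M.Cen) : Prop := ∃ g : G, X.1.image (g • ·) = Y.1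

/-- The set `𝒞/G` of orbits of central sets. -/
def COrb : Type _ := Quot M.cenRel

/-- The action is cofinite if `𝒞/G` is finite. -/
def Cofinite : Prop := Finite M.COrb

/-- `m_𝔖(A) = |𝒞_A / G|`. -/
noncomputable def m (A : Set (E G S)) : ℕ :=
  Nat.card {O : M.COrb // ∃ X : M.Cen, under G X.1 = A ∧ Quot.mk M.cenRel X = O}

def WeaklyTranslative : Prop :=
  ∀ (g : G) (x : S), ({x, g • x} : Finset S) ∈ M.C →
    M.rk {x, g • x} = M.rk ({x} : Finset S)

def Translative : Prop :=
  ∀ (g : G) (x : S), ({x, g • x} : Finset S) ∈ M.C → g • x = x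

def Centered : Prop := ∃ X ∈ M.C, under G X = (Set.univ : Set (E G S))

def Normal (_M : GSemimatroid G S) : Prop :=
  ∀ x : S, Subgroup.Normal (MulAction.stabilizer G x)

def AlmostArithmetic : Prop := M.Translative ∧ M.Normal

/-- The action is arithmetic: almost-arithmetic, and for every central `X` the set
`W(X) ⊆ Γ^X` is a subgroup (expressed via representative families of group elements). -/
def Arithmetic : Prop :=
  M.AlmostArithmetic ∧
    ∀ ⦃X : Finset S⦄, X ∈ M.C → ∀ γ δ : S → G,
      X.image (fun x => γ x • x) ∈ M.C → X.image (fun x => δ x • x) ∈ M.C →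
        X.image (fun x => (γ x * δ x) • x) ∈ M.C ∧
          X.image (fun x => (γ x)⁻¹ • x) ∈ M.C

/-- Remove from `X` all elements of the orbit `a₀`. -/
noncomputable def strip (a₀ : E G S) (X : Finset S) : Finset S :=
  X.filter (fun x => orbOf G x ≠ a₀)

/-- The Tutte polynomial of a `G`-semimatroid, as a function `ℤ × ℤ → ℤ`. -/
noncomputable def Tutte (x y : ℤ) : ℤ :=
  ∑ᶠ A ∈ M.CQ, (M.m A : ℤ) * (x - 1) ^ (M.rkQ Set.univ - M.rkQ A) *
    (y - 1) ^ (Nat.card A - M.rkQ A)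

end GSemimatroid

open GSemimatroid

set_option linter.unusedSectionVars false
set_option linter.unusedVariables false
set_option linter.unnecessarySimpa false

namespace GSemimatroid

variable {G S : Type*} [Group G] [MulAction G S] [DecidableEq S] (M : GSemimatroid G S)

lemma empty_mem : (∅ : Finset S) ∈ M.C := by
  obtain ⟨X, hX⟩ := M.nonempty
  exact M.downClosed hX (Finset.empty_subset X)

lemma rk_empty : M.rk ∅ = 0 :=
  Nat.le_zero.mp ((M.r1 ∅ M.empty_mem).trans_eq Finset.card_empty)

lemma mem_under {X : Finset S} {β : E G S} :
    β ∈ under G X ↔ ∃ w ∈ X, orbOf G w = β := by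
  simp [under, Set.mem_image]

lemma orbOf_smul (g : G) (y : S) : orbOf G (g • y) = orbOf G y :=
  Quotient.sound ⟨g, rfl⟩

lemma orbOf_eq_iff {u v : S} : orbOf G u = orbOf G v ↔ ∃ g : G, g • v = u := by
  constructor
  · intro h
    exact Quotient.exact h
  · intro ⟨g, hg⟩
    exact Quotient.sound ⟨g, hg⟩

variable {M}

lemma rset_nonempty (A : Set (E G S)) :
    {n : ℕ | ∃ X ∈ M.C, under G X ⊆ A ∧ M.rk X = n}.Nonempty :=
  ⟨0, ∅, M.empty_mem, by simp [under], M.rk_empty⟩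

lemma rset_bdd (A : Set (E G S)) :
    BddAbove {n : ℕ | ∃ X ∈ M.C, under G X ⊆ A ∧ M.rk X = n} := by
  obtain ⟨d, hd⟩ := M.finDim
  exact ⟨d, fun n ⟨X, hX, _, hrk⟩ => hrk ▸ (M.r1 X hX).trans (hd X hX)⟩

lemma rk_le_rkQ {A : Set (E G S)} {X : Finset S} (hX : X ∈ M.C) (h : under G X ⊆ A) :
    M.rk X ≤ M.rkQ A :=
  le_csSup (rset_bdd A) ⟨X, hX, h, rfl⟩

lemma exists_rkQ_witness (A : Set (E G S)) :
    ∃ X ∈ M.C, under G X ⊆ A ∧ M.rk X = M.rkQ A :=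
  Nat.sSup_mem (rset_nonempty A) (rset_bdd A)

lemma rkQ_mono {A B : Set (E G S)} (h : A ⊆ B) : M.rkQ A ≤ M.rkQ B := by
  obtain ⟨X, hX, hu, hrk⟩ := exists_rkQ_witness (M := M) A
  exact hrk ▸ rk_le_rkQ hX (hu.trans h)

end GSemimatroid
namespace GSemimatroid

variable {G S : Type*} [Group G] [MulAction G S] [DecidableEq S] {M : GSemimatroid G S}

/-- In a translative action, a central set meets each orbit at most once. -/
lemma eq_of_orb_eq (htr : M.Translative) {W : Finset S} (hW : W ∈ M.C) {u v : S}
    (hu : u ∈ W) (hv : v ∈ W) (h : orbOf G u = orbOf G v) : u = v := by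
  obtain ⟨g, hg⟩ := orbOf_eq_iff.mp h
  have hpair : ({v, g • v} : Finset S) ∈ M.C := by
    refine M.downClosed hW ?_
    intro w hw
    rcases Finset.mem_insert.mp hw with h1 | h1
    · exact h1 ▸ hv
    · rw [Finset.mem_singleton.mp h1, hg]; exact hu
  rw [← hg, htr g v hpair]

lemma rk_insert_le {W : Finset S} (hW : W ∈ M.C) {v : S} (h : insert v W ∈ M.C) :
    M.rk (insert v W) ≤ M.rk W + 1 := by
  have hv : ({v} : Finset S) ∈ M.C := M.singleton_mem v
  have h3 := M.r3 hW hv (by rwa [Finset.union_comm, ← Finset.insert_eq])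
  have hrkv : M.rk {v} ≤ 1 := (M.r1 _ hv).trans_eq (Finset.card_singleton v)
  calc M.rk (insert v W) = M.rk (W ∪ {v}) := by rw [Finset.union_comm, ← Finset.insert_eq]
    _ ≤ M.rk W + M.rk {v} := le_trans (Nat.le_add_right _ _) h3
    _ ≤ M.rk W + 1 := by omega

/-- Extension lemma: a central set can be enlarged inside `Y ∪ Z` to reach the rank of `Z`. -/
lemma exists_ext : ∀ n : ℕ, ∀ Y Z : Finset S, Y ∈ M.C → Z ∈ M.C → (Z \ Y).card ≤ n →
    M.rk Y ≤ M.rk Z → ∃ P, P ∈ M.C ∧ Y ⊆ P ∧ P ⊆ Y ∪ Z ∧ M.rk P = M.rk Z := by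
  intro n
  induction n with
  | zero =>
    intro Y Z hY hZ hc hle
    have hZY : Z ⊆ Y := by
      intro z hz
      by_contra hzY
      have : z ∈ Z \ Y := Finset.mem_sdiff.mpr ⟨hz, hzY⟩
      simp [Finset.card_eq_zero.mp (Nat.le_zero.mp hc)] at this
    exact ⟨Y, hY, subset_rfl, Finset.subset_union_left, le_antisymm hle (M.r2 hZ hY hZY)⟩
  | succ n ih =>
    intro Y Z hY hZ hc hle
    rcases eq_or_lt_of_le hle with heq | hlt
    · exact ⟨Y, hY, subset_rfl, Finset.subset_union_left, heq⟩
    · obtain ⟨v, hvZ, hvY, hins⟩ := M.cr2 hY hZ hlt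
      have hrk' : M.rk (insert v Y) ≤ M.rk Z :=
        le_trans (rk_insert_le hY hins) (Nat.succ_le_of_lt hlt)
      have hcard : (Z \ insert v Y).card ≤ n := by
        have hss : Z \ insert v Y ⊂ Z \ Y := by
          refine Finset.ssubset_iff_of_subset (fun w hw => ?_) |>.mpr ?_
          · rcases Finset.mem_sdiff.mp hw with ⟨h1, h2⟩
            exact Finset.mem_sdiff.mpr ⟨h1, fun hY' => h2 (Finset.mem_insert_of_mem hY')⟩
          · exact ⟨v, Finset.mem_sdiff.mpr ⟨hvZ, hvY⟩, fun hv => (Finset.mem_sdiff.mp hv).2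
              (Finset.mem_insert_self v Y)⟩
        have := Finset.card_lt_card hss
        omega
      obtain ⟨P, hP, hYP, hPsub, hrkP⟩ := ih (insert v Y) Z hins hZ hcard hrk'
      refine ⟨P, hP, (Finset.subset_insert v Y).trans hYP, hPsub.trans ?_, hrkP⟩
      intro w hw
      rcases Finset.mem_union.mp hw with h1 | h1
      · rcases Finset.mem_insert.mp h1 with h2 | h2
        · exact Finset.mem_union_right _ (h2 ▸ hvZ)
        · exact Finset.mem_union_left _ h2
      · exact Finset.mem_union_right _ h1

end GSemimatroid
namespace GSemimatroid

variable {G S : Type*} [Group G] [MulAction G S] [DecidableEq S] {M : GSemimatroid G S}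

/-- Inner loop for `add_point`. -/
lemma add_point_loop (htr : M.Translative) {P : Finset S} {z : S} {r : ℕ}
    (hP : P ∈ M.C) (hz : z ∈ P) (hzuniq : ∀ w ∈ P, orbOf G w = orbOf G z → w = z)
    (hrkP : M.rk P = r + 1) (hrkP0 : M.rk (P.erase z) = r)
    {y : S} (hy : orbOf G y = orbOf G z) (hyP : y ∉ P) :
    ∀ n : ℕ, ∀ W : Finset S, W ⊆ P.erase z → (P.erase z \ W).card ≤ n →
      insert y W ∈ M.C → insert y (P.erase z) ∈ M.C := by
  have hP0 : P.erase z ∈ M.C := M.downClosed hP (Finset.erase_subset z P)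
  have hyz : y ≠ z := fun h => hyP (h ▸ hz)
  have hyP0 : y ∉ P.erase z := fun h => hyP (Finset.mem_of_mem_erase h)
  intro n
  induction n with
  | zero =>
    intro W hWsub hWc hins
    have hWeq : W = P.erase z := Finset.eq_of_subset_of_card_le hWsub
      (by have := Finset.card_sdiff_add_card_eq_card hWsub; omega)
    exact hWeq ▸ hins
  | succ n ih =>
    intro W hWsub hWc hins
    by_cases hr : M.rk (insert y W) < M.rk P
    · obtain ⟨v, hvP, hvW, hins'⟩ := M.cr2 hins hP hr
      have hvz : v ≠ z := by
        intro h
        subst h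
        -- then y and v lie in a common central set with the same orbit: y = v
        have : y = v := eq_of_orb_eq htr hins'
          (Finset.mem_insert_of_mem (Finset.mem_insert_self y W))
          (Finset.mem_insert_self v _) hy
        exact hyz this
      have hvP0 : v ∈ P.erase z := Finset.mem_erase.mpr ⟨hvz, hvP⟩
      have hvW' : v ∉ insert y W → True := fun _ => trivial
      have hvnW : v ∉ W := fun h => hvW (Finset.mem_insert_of_mem h)
      have hcard : (P.erase z \ insert v W).card ≤ n := by
        have hss : P.erase z \ insert v W ⊂ P.erase z \ W := by
          refine Finset.ssubset_iff_of_subset (fun w hw => ?_) |>.mpr ?_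
          · rcases Finset.mem_sdiff.mp hw with ⟨h1, h2⟩
            exact Finset.mem_sdiff.mpr ⟨h1, fun h => h2 (Finset.mem_insert_of_mem h)⟩
          · exact ⟨v, Finset.mem_sdiff.mpr ⟨hvP0, hvnW⟩,
              fun h => (Finset.mem_sdiff.mp h).2 (Finset.mem_insert_self v W)⟩
        have := Finset.card_lt_card hss
        omega
      exact ih (insert v W) (Finset.insert_subset hvP0 hWsub) hcard
        (by rwa [Finset.insert_comm] at hins')
    · -- rk (insert y W) = r + 1 : use CR1 with X = P.erase z
      push_neg at hr
      have h1 : M.rk (insert y W) ≤ M.rk W + 1 :=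
        rk_insert_le (M.downClosed hP0 hWsub) hins
      have h2 : M.rk W ≤ r := hrkP0 ▸ M.r2 (M.downClosed hP0 hWsub) hP0 hWsub
      have hrkyW : M.rk (insert y W) = r + 1 :=
        le_antisymm (by omega) (hrkP ▸ hr)
      have hrkW : M.rk W = r := by omega
      have hcap : P.erase z ∩ insert y W = W := by
        ext w
        simp only [Finset.mem_inter, Finset.mem_insert]
        constructor
        · rintro ⟨h3, h4 | h4⟩
          · exact absurd h3 (h4 ▸ hyP0)
          · exact h4
        · exact fun h3 => ⟨hWsub h3, Or.inr h3⟩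
      have := M.cr1 hP0 hins (by rw [hcap, hrkP0, hrkW])
      have hunion : P.erase z ∪ insert y W = insert y (P.erase z) := by
        ext w
        simp only [Finset.mem_union, Finset.mem_insert]
        constructor
        · rintro (h3 | h3 | h3)
          · exact Or.inr h3
          · exact Or.inl h3
          · exact Or.inr (hWsub h3)
        · rintro (h3 | h3)
          · exact Or.inr (Or.inl h3)
          · exact Or.inl h3
      rwa [hunion] at this

/-- Key lemma: if `rkQ (A' ∪ {α}) = rkQ A' + 1` then any central set over `A'` can be
extended by any point of the orbit `α`. -/
lemma add_point (htr : M.Translative) {A' : Set (E G S)} {α : E G S} (hα : α ∉ A')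
    (hr : M.rkQ (A' ∪ {α}) = M.rkQ A' + 1) {Y : Finset S} (hY : Y ∈ M.C)
    (hYA : under G Y ⊆ A') {y : S} (hy : orbOf G y = α) : insert y Y ∈ M.C := by
  set r := M.rkQ A' with hrdef
  obtain ⟨Z, hZ, hZu, hZrk⟩ := exists_rkQ_witness (M := M) (A' ∪ {α})
  rw [hr] at hZrk
  have hYle : M.rk Y ≤ r := rk_le_rkQ hY hYA
  obtain ⟨P, hP, hYP, hPsub, hPrk⟩ := exists_ext (Z \ Y).card Y Z hY hZ le_rfl (by omega)
  have hPu : under G P ⊆ A' ∪ {α} := by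
    intro β hβ
    obtain ⟨w, hw, hwo⟩ := mem_under.mp hβ
    rcases Finset.mem_union.mp (hPsub hw) with h1 | h1
    · exact Or.inl (hYA (mem_under.mpr ⟨w, h1, hwo⟩))
    · exact hZu (mem_under.mpr ⟨w, h1, hwo⟩)
  by_cases hyP : y ∈ P
  · exact M.downClosed hP (Finset.insert_subset hyP hYP)
  -- find the unique point z of orbit α in P
  have hzex : ∃ z ∈ P, orbOf G z = α := by
    by_contra hno
    push_neg at hno
    have : under G P ⊆ A' := by
      intro β hβ
      obtain ⟨w, hw, hwo⟩ := mem_under.mp hβ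
      rcases hPu hβ with h1 | h1
      · exact h1
      · exact absurd (hwo.trans h1) (hno w hw)
    have := rk_le_rkQ hP this
    omega
  obtain ⟨z, hzP, hzα⟩ := hzex
  have hzuniq : ∀ w ∈ P, orbOf G w = orbOf G z → w = z := fun w hw h =>
    eq_of_orb_eq htr hP hw hzP h
  have hYP0 : Y ⊆ P.erase z := by
    intro v hv
    refine Finset.mem_erase.mpr ⟨fun h => ?_, hYP hv⟩
    exact hα (hzα ▸ hYA (mem_under.mpr ⟨v, hv, h ▸ rfl⟩))
  have hP0u : under G (P.erase z) ⊆ A' := by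
    intro β hβ
    obtain ⟨w, hw, hwo⟩ := mem_under.mp hβ
    have hwP := Finset.mem_of_mem_erase hw
    rcases hPu (mem_under.mpr ⟨w, hwP, hwo⟩) with h1 | h1
    · exact h1
    · exact absurd (hzuniq w hwP (by rw [hwo, h1, hzα]))
        (Finset.ne_of_mem_erase hw)
  have hP0 : P.erase z ∈ M.C := M.downClosed hP (Finset.erase_subset z P)
  have hrkP0le : M.rk (P.erase z) ≤ r := rk_le_rkQ hP0 hP0u
  have hPins : P = insert z (P.erase z) := (Finset.insert_erase hzP).symm
  have hrkP0 : M.rk (P.erase z) = r := by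
    have := rk_insert_le hP0 (hPins ▸ hP)
    rw [← hPins] at this
    omega
  have hfin : insert y (P.erase z) ∈ M.C :=
    add_point_loop htr hP hzP hzuniq (hPrk.trans hZrk) hrkP0 (hy.trans hzα.symm) hyP
      (P.erase z).card ∅ (Finset.empty_subset _) (by simp)
      (by simpa using M.singleton_mem y)
  exact M.downClosed hfin (Finset.insert_subset_insert y hYP0)

end GSemimatroid
namespace GSemimatroid

variable {G S : Type*} [Group G] [MulAction G S] [DecidableEq S] {M : GSemimatroid G S}

lemma under_union {X Y : Finset S} : under G (X ∪ Y) = under G X ∪ under G Y := by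
  ext β
  simp only [mem_under, Set.mem_union, Finset.mem_union]
  constructor
  · rintro ⟨w, h | h, hw⟩
    exacts [Or.inl ⟨w, h, hw⟩, Or.inr ⟨w, h, hw⟩]
  · rintro (⟨w, h, hw⟩ | ⟨w, h, hw⟩)
    exacts [⟨w, Or.inl h, hw⟩, ⟨w, Or.inr h, hw⟩]

lemma under_insert {X : Finset S} {v : S} :
    under G (insert v X) = insert (orbOf G v) (under G X) := by
  ext β
  simp only [mem_under, Set.mem_insert_iff, Finset.mem_insert]
  constructor
  · rintro ⟨w, h | h, hw⟩
    exacts [Or.inl (h ▸ hw.symm), Or.inr ⟨w, h, hw⟩]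
  · rintro (h | ⟨w, h, hw⟩)
    exacts [⟨v, Or.inl rfl, h.symm⟩, ⟨w, Or.inr h, hw⟩]

lemma rkQ_union_singleton_le (htr : M.Translative) (A' : Set (E G S)) (α : E G S) :
    M.rkQ (A' ∪ {α}) ≤ M.rkQ A' + 1 := by
  obtain ⟨Z, hZ, hZu, hZrk⟩ := exists_rkQ_witness (M := M) (A' ∪ {α})
  rw [← hZrk]
  by_cases hzex : ∃ z ∈ Z, orbOf G z = α
  · obtain ⟨z, hzZ, hzα⟩ := hzex
    have hZ0 : Z.erase z ∈ M.C := M.downClosed hZ (Finset.erase_subset z Z)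
    have hZ0u : under G (Z.erase z) ⊆ A' := by
      intro β hβ
      obtain ⟨w, hw, hwo⟩ := mem_under.mp hβ
      have hwZ := Finset.mem_of_mem_erase hw
      rcases hZu (mem_under.mpr ⟨w, hwZ, hwo⟩) with h1 | h1
      · exact h1
      · exact absurd (eq_of_orb_eq htr hZ hwZ hzZ (by rw [hwo, h1, hzα]))
          (Finset.ne_of_mem_erase hw)
    have h1 : M.rk Z ≤ M.rk (Z.erase z) + 1 := by
      have := rk_insert_le hZ0 ((Finset.insert_erase hzZ).symm ▸ hZ)
      rwa [Finset.insert_erase hzZ] at this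
    exact h1.trans (Nat.add_le_add_right (rk_le_rkQ hZ0 hZ0u) 1)
  · push_neg at hzex
    have : under G Z ⊆ A' := by
      intro β hβ
      obtain ⟨w, hw, hwo⟩ := mem_under.mp hβ
      rcases hZu hβ with h1 | h1
      · exact h1
      · exact absurd (hwo.trans h1) (hzex w hw)
    exact (rk_le_rkQ hZ this).trans (Nat.le_add_right _ 1)

section Indexed

variable {k : ℕ} {A : Set (E G S)} {a : Fin k → E G S}

lemma union_image_insert (i : Fin k) (T : Finset (Fin k)) :
    A ∪ ↑((insert i T).image a) = (A ∪ ↑(T.image a)) ∪ {a i} := by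
  rw [Finset.image_insert]
  push_cast
  rw [Set.insert_eq]
  ext β
  simp only [Set.mem_union, Set.mem_singleton_iff]
  tauto

lemma rkQ_indexed_le (htr : M.Translative) :
    ∀ T : Finset (Fin k), M.rkQ (A ∪ ↑(T.image a)) ≤ M.rkQ A + T.card := by
  intro T
  induction T using Finset.induction with
  | empty => simp
  | @insert i T hiT ih =>
    rw [union_image_insert, Finset.card_insert_of_notMem hiT]
    calc M.rkQ ((A ∪ ↑(T.image a)) ∪ {a i}) ≤ M.rkQ (A ∪ ↑(T.image a)) + 1 :=
          rkQ_union_singleton_le htr _ _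
      _ ≤ M.rkQ A + T.card + 1 := by omega

lemma rkQ_indexed_ge (htr : M.Translative) :
    ∀ n : ℕ, ∀ T T' : Finset (Fin k), T ⊆ T' → (T' \ T).card ≤ n →
      M.rkQ (A ∪ ↑(T'.image a)) ≤ M.rkQ (A ∪ ↑(T.image a)) + (T' \ T).card := by
  intro n
  induction n with
  | zero =>
    intro T T' hsub hc
    have h0 : (T' \ T).card = 0 := Nat.le_zero.mp hc
    have : T' = T := Finset.Subset.antisymm (by
      intro i hi
      by_contra hiT
      have : i ∈ T' \ T := Finset.mem_sdiff.mpr ⟨hi, hiT⟩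
      simp [Finset.card_eq_zero.mp h0] at this) hsub
    subst this
    simp
  | succ n ih =>
    intro T T' hsub hc
    by_cases hTT : T' ⊆ T
    · have : T' = T := Finset.Subset.antisymm hTT hsub
      subst this
      simp
    · obtain ⟨i, hiT', hiT⟩ := Finset.not_subset.mp hTT
      have hins : insert i T ⊆ T' := Finset.insert_subset hiT' hsub
      have hsd : T' \ insert i T = (T' \ T).erase i := by
        ext j
        simp only [Finset.mem_sdiff, Finset.mem_erase, Finset.mem_insert]
        tauto
      have hcard : (T' \ insert i T).card ≤ n := by
        rw [hsd]
        have hi : i ∈ T' \ T := Finset.mem_sdiff.mpr ⟨hiT', hiT⟩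
        have := Finset.card_erase_of_mem hi
        omega
      have h1 := ih (insert i T) T' hins hcard
      have h2 : M.rkQ (A ∪ ↑((insert i T).image a)) ≤ M.rkQ (A ∪ ↑(T.image a)) + 1 := by
        rw [union_image_insert]
        exact rkQ_union_singleton_le htr _ _
      have h3 : (T' \ insert i T).card + 1 = (T' \ T).card := by
        rw [hsd]
        have hi : i ∈ T' \ T := Finset.mem_sdiff.mpr ⟨hiT', hiT⟩
        have := Finset.card_erase_of_mem hi
        have : 0 < (T' \ T).card := Finset.card_pos.mpr ⟨i, hi⟩
        omega
      omega

lemma range_eq_image : Set.range a = ↑(Finset.univ.image a) := by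
  rw [Finset.coe_image, Finset.coe_univ, Set.image_univ]

/-- Under the hypothesis `rkQ (A ∪ range a) = rkQ A + k`, every partial union has the
expected rank. -/
lemma rkQ_indexed_eq (htr : M.Translative)
    (hrk : M.rkQ (A ∪ Set.range a) = M.rkQ A + k) (T : Finset (Fin k)) :
    M.rkQ (A ∪ ↑(T.image a)) = M.rkQ A + T.card := by
  have hle := rkQ_indexed_le (M := M) (A := A) (a := a) htr T
  have hge := rkQ_indexed_ge (M := M) (A := A) (a := a) htr ((Finset.univ \ T).card)
    T Finset.univ (Finset.subset_univ T) le_rfl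
  rw [← range_eq_image] at hge
  have hcard : T.card + (Finset.univ \ T).card = k := by
    have h := Finset.card_sdiff_add_card_eq_card (Finset.subset_univ T)
    rw [Finset.card_univ, Fintype.card_fin] at h
    omega
  omega

end Indexed

end GSemimatroid
namespace GSemimatroid

variable {G S : Type*} [Group G] [MulAction G S] [DecidableEq S] {M : GSemimatroid G S}

section Multi

variable {k : ℕ} {A : Set (E G S)} {a : Fin k → E G S}

/-- Multi-point extension: any central set over `A` can be extended by arbitrary
representatives of the independent orbits `a i`. -/
lemma multi_ext (htr : M.Translative) (hinj : Function.Injective a)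
    (hnotin : ∀ i, a i ∉ A) (hrk : M.rkQ (A ∪ Set.range a) = M.rkQ A + k)
    {Y : Finset S} (hY : Y ∈ M.C) (hYA : under G Y ⊆ A) {y : Fin k → S}
    (hy : ∀ i, orbOf G (y i) = a i) :
    ∀ T : Finset (Fin k), Y ∪ T.image y ∈ M.C := by
  intro T
  induction T using Finset.induction with
  | empty => simpa using hY
  | @insert i T hiT ih =>
    have hunder : under G (Y ∪ T.image y) ⊆ A ∪ ↑(T.image a) := by
      rw [under_union]
      intro β hβ
      rcases hβ with h1 | h1
      · exact Or.inl (hYA h1)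
      · obtain ⟨w, hw, hwo⟩ := mem_under.mp h1
        obtain ⟨j, hjT, hjw⟩ := Finset.mem_image.mp hw
        exact Or.inr (by
          rw [← hwo, ← hjw, hy j]
          exact_mod_cast Finset.mem_coe.mpr (Finset.mem_image_of_mem a hjT))
    have hα : a i ∉ A ∪ ↑(T.image a) := by
      rintro (h1 | h1)
      · exact hnotin i h1
      · obtain ⟨j, hjT, hj⟩ := Finset.mem_image.mp (Finset.mem_coe.mp h1)
        exact hiT (hinj hj ▸ hjT)
    have hr : M.rkQ ((A ∪ ↑(T.image a)) ∪ {a i}) = M.rkQ (A ∪ ↑(T.image a)) + 1 := by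
      rw [← union_image_insert, rkQ_indexed_eq htr hrk, rkQ_indexed_eq htr hrk,
        Finset.card_insert_of_notMem hiT]
      omega
    have := add_point htr hα hr ih hunder (hy i)
    rw [Finset.image_insert, Finset.union_insert]
    exact this

end Multi

section Stab

lemma smul_finset_mem_C (g : G) {X : Finset S} (hX : X ∈ M.C) : g • X ∈ M.C := by
  rw [Finset.smul_finset_def]
  exact M.smul_mem g hX

lemma under_smul (g : G) (X : Finset S) : under G (g • X) = under G X := by
  ext β
  simp only [mem_under]
  constructor
  · rintro ⟨w, hw, hwo⟩
    obtain ⟨u, hu, rfl⟩ := Finset.mem_smul_finset.mp hw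
    exact ⟨u, hu, by rwa [orbOf_smul] at hwo⟩
  · rintro ⟨w, hw, hwo⟩
    exact ⟨g • w, Finset.smul_mem_smul_finset hw, by rwa [orbOf_smul]⟩

/-- In a translative action, a setwise stabilizer of a central set fixes it pointwise. -/
lemma fix_pointwise (htr : M.Translative) {X : Finset S} (hX : X ∈ M.C) {g : G}
    (hg : g • X = X) {u : S} (hu : u ∈ X) : g • u = u := by
  have hmem : g • u ∈ X := hg ▸ Finset.smul_mem_smul_finset hu
  have hpair : ({u, g • u} : Finset S) ∈ M.C := by
    refine M.downClosed hX ?_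
    intro w hw
    rcases Finset.mem_insert.mp hw with h | h
    · exact h ▸ hu
    · exact (Finset.mem_singleton.mp h) ▸ hmem
  exact htr g u hpair

lemma stab_orb_eq (hn : M.Normal) {u v : S} (h : orbOf G u = orbOf G v) :
    MulAction.stabilizer G u = MulAction.stabilizer G v := by
  obtain ⟨g, rfl⟩ := orbOf_eq_iff.mp h
  ext h'
  simp only [MulAction.mem_stabilizer_iff]
  constructor
  · intro hh
    have h0 : (g⁻¹ * h' * g) • v = v := by
      calc (g⁻¹ * h' * g) • v = g⁻¹ • (h' • (g • v)) := by
            rw [← mul_smul, ← mul_smul]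
        _ = v := by rw [hh, inv_smul_smul]
    have h1 := (hn v).conj_mem _ h0 g
    have he : g * (g⁻¹ * h' * g) * g⁻¹ = h' := by group
    rwa [he, MulAction.mem_stabilizer_iff] at h1
  · intro hh
    have h1 := (hn v).conj_mem _ hh g⁻¹
    rw [inv_inv] at h1
    rw [MulAction.mem_stabilizer_iff] at h1
    calc h' • g • v = (h' * g) • v := by rw [mul_smul]
      _ = (g * (g⁻¹ * h' * g)) • v := by congr 1; group
      _ = g • ((g⁻¹ * h' * g) • v) := by rw [mul_smul]
      _ = g • v := by rw [h1]

/-- Two central sets with the same orbit set have the same (setwise) stabilizer. -/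
lemma stab_eq_of_under_eq (htr : M.Translative) (hn : M.Normal) {X₁ X₂ : Finset S}
    (h₁ : X₁ ∈ M.C) (h₂ : X₂ ∈ M.C) (hu : under G X₁ = under G X₂) :
    MulAction.stabilizer G X₁ = MulAction.stabilizer G X₂ := by
  have key : ∀ Y₁ Y₂ : Finset S, Y₁ ∈ M.C → Y₂ ∈ M.C → under G Y₁ = under G Y₂ →
      ∀ g : G, g • Y₁ = Y₁ → g • Y₂ = Y₂ := by
    intro Y₁ Y₂ hY₁ hY₂ hu g hg
    have hfix : ∀ v ∈ Y₂, g • v = v := by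
      intro v hv
      have : orbOf G v ∈ under G Y₁ := hu ▸ mem_under.mpr ⟨v, hv, rfl⟩
      obtain ⟨u, hu', huo⟩ := mem_under.mp this
      have hgu : g • u = u := fix_pointwise htr hY₁ hg hu'
      have : g ∈ MulAction.stabilizer G v := stab_orb_eq hn huo ▸
        (MulAction.mem_stabilizer_iff.mpr hgu)
      exact this
    rw [Finset.smul_finset_def]
    calc Y₂.image (g • ·) = Y₂.image id := Finset.image_congr (fun v hv => hfix v hv)
      _ = Y₂ := Finset.image_id
  ext g
  simp only [MulAction.mem_stabilizer_iff]
  exact ⟨key X₁ X₂ h₁ h₂ hu g, key X₂ X₁ h₂ h₁ hu.symm g⟩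

end Stab

section CenRel

lemma cenRel_iff {X Y : M.Cen} : M.cenRel X Y ↔ ∃ g : G, g • X.1 = Y.1 := by
  unfold cenRel
  simp_rw [Finset.smul_finset_def]

lemma cenRel_equivalence : Equivalence M.cenRel := by
  constructor
  · intro X
    exact cenRel_iff.mpr ⟨1, one_smul _ _⟩
  · intro X Y h
    obtain ⟨g, hg⟩ := cenRel_iff.mp h
    exact cenRel_iff.mpr ⟨g⁻¹, by rw [← hg, inv_smul_smul]⟩
  · intro X Y Z h₁ h₂
    obtain ⟨g, hg⟩ := cenRel_iff.mp h₁
    obtain ⟨g', hg'⟩ := cenRel_iff.mp h₂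
    exact cenRel_iff.mpr ⟨g' * g, by rw [mul_smul, hg, hg']⟩

lemma cen_quot_eq {X Y : M.Cen} :
    Quot.mk M.cenRel X = Quot.mk M.cenRel Y ↔ M.cenRel X Y :=
  ⟨fun h => (cenRel_equivalence.eqvGen_iff).mp (Quot.eqvGen_exact h), Quot.sound⟩

end CenRel

end GSemimatroid
section OrbitQuot

variable {G : Type*} [Group G] (H : Subgroup G) (Z : Type*) [MulAction G Z]

/-- The orbit space of the diagonal `G`-action on `(G ⧸ H) × Z` is in bijection with the
orbit space of the restricted `H`-action on `Z`. -/
noncomputable def orbitQuotProdEquiv :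
    Quotient (MulAction.orbitRel G ((G ⧸ H) × Z)) ≃ Quotient (MulAction.orbitRel H Z) := by
  refine Equiv.mk
    (Quotient.lift (fun p : (G ⧸ H) × Z =>
      Quotient.mk (MulAction.orbitRel H Z) ((Quotient.out p.1)⁻¹ • p.2)) ?_)
    (Quotient.lift (fun z : Z =>
      Quotient.mk (MulAction.orbitRel G ((G ⧸ H) × Z)) (((1 : G) : G ⧸ H), z)) ?_)
    ?_ ?_
  · rintro ⟨c, z⟩ ⟨c', z'⟩ hrel
    obtain ⟨γ, hγ⟩ := MulAction.mem_orbit_iff.mp hrel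
    have hc : γ • c' = c := congrArg Prod.fst hγ
    have hz : γ • z' = z := congrArg Prod.snd hγ
    simp only
    have key : (↑(Quotient.out c) : G ⧸ H) = ↑(γ * Quotient.out c') := by
      rw [QuotientGroup.out_eq', ← hc, ← QuotientGroup.out_eq' c']
      have h2 := MulAction.Quotient.smul_mk (G := G) (X := G) H γ (Quotient.out c')
      rw [smul_eq_mul] at h2
      rw [QuotientGroup.out_eq'] at h2 ⊢
      exact h2
    have hη : (Quotient.out c)⁻¹ * γ * Quotient.out c' ∈ H := by
      have := QuotientGroup.eq.mp key
      rwa [← mul_assoc] at this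
    refine Quotient.sound' (MulAction.mem_orbit_iff.mpr
      ⟨⟨(Quotient.out c)⁻¹ * γ * Quotient.out c', hη⟩, ?_⟩)
    show ((Quotient.out c)⁻¹ * γ * Quotient.out c') • ((Quotient.out c')⁻¹ • z')
      = (Quotient.out c)⁻¹ • z
    rw [smul_smul, ← hz, smul_smul]
    congr 1
    group
  · intro z z' hrel
    obtain ⟨h, hh⟩ := MulAction.mem_orbit_iff.mp hrel
    refine Quotient.sound' (MulAction.mem_orbit_iff.mpr ⟨(h : G), ?_⟩)
    refine Prod.ext ?_ ?_
    · show (h : G) • (((1 : G) : G ⧸ H)) = ((1 : G) : G ⧸ H)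
      rw [MulAction.Quotient.smul_mk]
      exact QuotientGroup.eq.mpr (by simpa using inv_mem h.2)
    · exact hh
  · rintro ⟨c, z⟩
    refine Quotient.sound' (MulAction.mem_orbit_iff.mpr ⟨(Quotient.out c)⁻¹, ?_⟩)
    have h1 : (Quotient.out c)⁻¹ • c = ((1 : G) : G ⧸ H) := by
      have h0 := MulAction.Quotient.smul_mk (G := G) (X := G) H (Quotient.out c)⁻¹ (Quotient.out c)
      rw [QuotientGroup.out_eq'] at h0
      rw [h0, smul_eq_mul, inv_mul_cancel]
    show ((Quotient.out c)⁻¹ • c, (Quotient.out c)⁻¹ • z)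
      = (((1 : G) : G ⧸ H), (Quotient.out c)⁻¹ • z)
    rw [h1]
  · intro q
    refine Quotient.inductionOn q (fun z => ?_)
    have h1 : Quotient.out (((1 : G) : G ⧸ H)) ∈ H := by
      have := QuotientGroup.eq.mp (QuotientGroup.out_eq' (((1 : G) : G ⧸ H)))
      simpa using this
    refine Quotient.sound' (MulAction.mem_orbit_iff.mpr
      ⟨(⟨Quotient.out (((1 : G) : G ⧸ H)), h1⟩ : H)⁻¹, rfl⟩)

end OrbitQuot
namespace GSemimatroid

variable {G S : Type*} [Group G] [MulAction G S] [DecidableEq S] {M : GSemimatroid G S}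

lemma filter_smul (γ : G) (W : Finset S) (A : Set (E G S)) :
    (γ • W).filter (fun w => orbOf G w ∈ A) = γ • (W.filter (fun w => orbOf G w ∈ A)) := by
  rw [Finset.smul_finset_def, Finset.smul_finset_def, Finset.filter_image]
  congr 1
  refine Finset.filter_congr (fun w _ => ?_)
  simp [orbOf_smul]

lemma under_filter {W : Finset S} {A R : Set (E G S)} (hdisj : ∀ β ∈ R, β ∉ A)
    (hWu : under G W = A ∪ R) :
    under G (W.filter (fun w => orbOf G w ∈ A)) = A := by
  ext β
  simp only [mem_under, Finset.mem_filter]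
  constructor
  · rintro ⟨w, ⟨_, h2⟩, rfl⟩
    exact h2
  · intro hβ
    have : β ∈ under G W := hWu ▸ Or.inl hβ
    obtain ⟨w, hw, hwo⟩ := mem_under.mp this
    exact ⟨w, ⟨hw, hwo ▸ hβ⟩, hwo⟩

lemma coset_eq_of_point_eq {g g' : G} {u : S}
    (h : g • u = g' • u) : (↑g : G ⧸ MulAction.stabilizer G u) = ↑g' := by
  rw [QuotientGroup.eq]
  rw [MulAction.mem_stabilizer_iff]
  calc (g⁻¹ * g') • u = g⁻¹ • (g' • u) := by rw [mul_smul]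
    _ = g⁻¹ • (g • u) := by rw [h]
    _ = u := by rw [inv_smul_smul]

lemma out_smul_point (K : Subgroup G) (u : S) (hK : K = MulAction.stabilizer G u) (g : G) :
    (Quotient.out ((↑g : G ⧸ K))) • u = g • u := by
  subst hK
  have h1 := QuotientGroup.eq.mp (QuotientGroup.out_eq' (↑g : G ⧸ MulAction.stabilizer G u))
  have h2 : ((Quotient.out ((↑g : G ⧸ MulAction.stabilizer G u)))⁻¹ * g) • u = u := h1
  calc (Quotient.out ((↑g : G ⧸ MulAction.stabilizer G u))) • u
      = Quotient.out ((↑g : G ⧸ MulAction.stabilizer G u)) •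
        (((Quotient.out ((↑g : G ⧸ MulAction.stabilizer G u)))⁻¹ * g) • u) := by rw [h2]
    _ = (Quotient.out ((↑g : G ⧸ MulAction.stabilizer G u)) *
        ((Quotient.out ((↑g : G ⧸ MulAction.stabilizer G u)))⁻¹ * g)) • u := by rw [smul_smul]
    _ = g • u := by rw [mul_inv_cancel_left]

end GSemimatroid

/-- For an almost-arithmetic cofinite `G`-semimatroid: if
`rk̲(A ∪ {a₁,…,a_k}) = rk̲ A + k` for distinct orbits `aᵢ ∉ A`, then for every
`X ∈ 𝒞_A` and representatives `xᵢ ∈ aᵢ` the quotient multiplicity satisfies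
`m(A ∪ {a₁,…,a_k}) = m(A) · [Γ(X) × Π Γ(xᵢ) : θ(G)]`, where the index of the image of
the diagonal map `θ` is expressed as the number of orbits of the diagonal
`G`-translation action on `(G ⧸ stab X) × Π (G ⧸ stab xᵢ)`. -/
theorem almostArithmetic_multiplicity_index
    {G S : Type*} [Group G] [MulAction G S] [DecidableEq S]
    (M : GSemimatroid G S) (hcof : M.Cofinite) (haa : M.AlmostArithmetic)
    (A : Set (E G S)) (hA : A ∈ M.CQ) (k : ℕ) (a : Fin k → E G S)
    (hinj : Function.Injective a) (hnotin : ∀ i, a i ∉ A)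
    (hrk : M.rkQ (A ∪ Set.range a) = M.rkQ A + k) :
    ∀ X ∈ M.CA A, ∀ x : Fin k → S, (∀ i, orbOf G (x i) = a i) →
      M.m (A ∪ Set.range a) =
        M.m A * Nat.card (Quotient (MulAction.orbitRel G
          ((G ⧸ MulAction.stabilizer G X) ×
            ((i : Fin k) → G ⧸ MulAction.stabilizer G (x i))))) := by
  intro X hX x hx
  obtain ⟨htr, hnor⟩ := haa
  obtain ⟨hXC, hXu⟩ := hX
  set B : Set (E G S) := A ∪ Set.range a with hBdef
  set H : Subgroup G := MulAction.stabilizer G X with hHdef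
  set Z : Type _ := (i : Fin k) → G ⧸ MulAction.stabilizer G (x i) with hZdef
  set SA := {O : M.COrb // ∃ Xc : M.Cen, under G Xc.1 = A ∧ Quot.mk M.cenRel Xc = O}
    with hSAdef
  set SB := {O : M.COrb // ∃ Xc : M.Cen, under G Xc.1 = B ∧ Quot.mk M.cenRel Xc = O}
    with hSBdef
  -- chosen representatives of classes in `SA`
  let Ys : SA → M.Cen := fun s => s.2.choose
  have hYs1 : ∀ s, under G (Ys s).1 = A := fun s => s.2.choose_spec.1
  have hYs2 : ∀ s, Quot.mk M.cenRel (Ys s) = s.1 := fun s => s.2.choose_spec.2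
  -- representative points from cosets
  let pts : Z → Finset S := fun z =>
    Finset.image (fun i => Quotient.out (z i) • x i) Finset.univ
  have hpts_orb : ∀ (z : Z) (i : Fin k), orbOf G (Quotient.out (z i) • x i) = a i :=
    fun z i => by rw [orbOf_smul, hx i]
  have hpts_mem : ∀ (z : Z) {w : S}, w ∈ pts z → ∃ i, w = Quotient.out (z i) • x i := by
    intro z w hw
    obtain ⟨i, _, hi⟩ := Finset.mem_image.mp hw
    exact ⟨i, hi.symm⟩
  have hunder_pts : ∀ z : Z, under G (pts z) = Set.range a := by
    intro z
    ext β
    simp only [mem_under, Set.mem_range]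
    constructor
    · rintro ⟨w, hw, rfl⟩
      obtain ⟨i, rfl⟩ := hpts_mem z hw
      exact ⟨i, (hpts_orb z i).symm⟩
    · rintro ⟨i, rfl⟩
      exact ⟨Quotient.out (z i) • x i,
        Finset.mem_image_of_mem _ (Finset.mem_univ i), hpts_orb z i⟩
  have hmemU : ∀ (s : SA) (z : Z), (Ys s).1 ∪ pts z ∈ M.C := by
    intro s z
    exact multi_ext htr hinj hnotin hrk (Ys s).2 (le_of_eq (hYs1 s)) 
      (fun i => hpts_orb z i) Finset.univ
  have hunderU : ∀ (s : SA) (z : Z), under G ((Ys s).1 ∪ pts z) = B := by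
    intro s z
    rw [under_union, hYs1 s, hunder_pts z]
  -- the stabilizer of every representative is `H`
  have hstabYs : ∀ s : SA, MulAction.stabilizer G (Ys s).1 = H := by
    intro s
    exact stab_eq_of_under_eq htr hnor (Ys s).2 hXC (by rw [hYs1 s, hXu])
  -- compatibility of `pts` with the action
  have hpts_smul : ∀ (γ : G) (z : Z), pts (fun i => γ • z i) = γ • pts z := by
    intro γ z
    have hpt : ∀ i : Fin k, Quotient.out (γ • z i) • x i = γ • (Quotient.out (z i) • x i) := by
      intro i
      have h1 : (γ • z i) = (↑(γ * Quotient.out (z i)) : G ⧸ MulAction.stabilizer G (x i)) := by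
        conv_lhs => rw [← QuotientGroup.out_eq' (z i)]
        rw [MulAction.Quotient.smul_mk, smul_eq_mul]
      rw [h1, out_smul_point _ _ rfl, mul_smul]
    calc pts (fun i => γ • z i)
        = Finset.image (fun i => γ • (Quotient.out (z i) • x i)) Finset.univ :=
          Finset.image_congr (fun i _ => hpt i)
      _ = γ • pts z := by
        rw [Finset.smul_finset_def, Finset.image_image]
        rfl
  -- the forward map
  let F0 : SA → Z → SB := fun s z =>
    ⟨Quot.mk M.cenRel ⟨(Ys s).1 ∪ pts z, hmemU s z⟩,
      ⟨⟨(Ys s).1 ∪ pts z, hmemU s z⟩, hunderU s z, rfl⟩⟩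
  have hwd : ∀ (s : SA) (z z' : Z), (MulAction.orbitRel H Z).r z z' → F0 s z = F0 s z' := by
    intro s z z' hrel
    obtain ⟨h, hh⟩ := MulAction.mem_orbit_iff.mp hrel
    -- (h : H) • z' = z
    have hz : (fun i => (h : G) • z' i) = z := hh
    have hYfix : (h : G) • (Ys s).1 = (Ys s).1 :=
      MulAction.mem_stabilizer_iff.mp ((hstabYs s).symm ▸ h.2)
    have hset : (h : G) • ((Ys s).1 ∪ pts z') = (Ys s).1 ∪ pts z := by
      rw [Finset.smul_finset_union, hYfix, ← hpts_smul (h : G) z', ← hz]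
    refine Subtype.ext ?_
    show Quot.mk M.cenRel _ = Quot.mk M.cenRel _
    refine (cen_quot_eq.mpr (cenRel_iff.mpr ⟨(h : G), ?_⟩)).symm
    exact hset
  let Fwd : SA × Quotient (MulAction.orbitRel H Z) → SB := fun p =>
    Quotient.liftOn p.2 (F0 p.1) (hwd p.1)
  have hbij : Function.Bijective Fwd := by
    constructor
    · -- injectivity
      rintro ⟨s, q⟩ ⟨t, q'⟩ hF
      obtain ⟨z, rfl⟩ := Quotient.exists_rep q
      obtain ⟨z', rfl⟩ := Quotient.exists_rep q'
      have hval : (F0 s z).1 = (F0 t z').1 := congrArg Subtype.val hF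
      obtain ⟨γ, hγ⟩ := cenRel_iff.mp (cen_quot_eq.mp hval)
      have hfilt : ∀ (u : SA) (w : Z),
          ((Ys u).1 ∪ pts w).filter (fun v => orbOf G v ∈ A) = (Ys u).1 := by
        intro u w
        ext v
        simp only [Finset.mem_filter, Finset.mem_union]
        constructor
        · rintro ⟨h1 | h1, h2⟩
          · exact h1
          · obtain ⟨i, rfl⟩ := hpts_mem w h1
            exact absurd (hpts_orb w i ▸ h2) (hnotin i)
        · intro hv
          exact ⟨Or.inl hv, (hYs1 u) ▸ mem_under.mpr ⟨v, hv, rfl⟩⟩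
      have hstrip : γ • (Ys s).1 = (Ys t).1 := by
        have h0 := congrArg (fun W : Finset S => W.filter (fun v => orbOf G v ∈ A)) hγ
        simp only [filter_smul, hfilt] at h0
        exact h0
      have hst : s = t := by
        refine Subtype.ext ?_
        rw [← hYs2 s, ← hYs2 t]
        exact cen_quot_eq.mpr (cenRel_iff.mpr ⟨γ, hstrip⟩)
      subst hst
      have hγH : γ ∈ H := by
        rw [← hstabYs s]
        exact MulAction.mem_stabilizer_iff.mpr hstrip
      have hptseq : γ • pts z = pts z' := by
        have h2 : (Ys s).1 ∪ γ • pts z = (Ys s).1 ∪ pts z' := by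
          conv_lhs => rw [← hstrip]
          rw [← Finset.smul_finset_union, hγ]
        ext v
        constructor
        · intro hv
          have hvB : v ∈ (Ys s).1 ∪ pts z' := by
            rw [← h2]
            exact Finset.mem_union_right _ hv
          obtain ⟨u, hu, rfl⟩ := Finset.mem_smul_finset.mp hv
          obtain ⟨i, rfl⟩ := hpts_mem z hu
          have horb : orbOf G (γ • (Quotient.out (z i) • x i)) = a i := by
            rw [orbOf_smul, hpts_orb]
          rcases Finset.mem_union.mp hvB with h3 | h3
          · have : a i ∈ A := by
              rw [← horb, ← hYs1 s]
              exact mem_under.mpr ⟨_, h3, rfl⟩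
            exact absurd this (hnotin i)
          · exact h3
        · intro hv
          have hvB : v ∈ (Ys s).1 ∪ γ • pts z := by
            rw [h2]
            exact Finset.mem_union_right _ hv
          obtain ⟨i, rfl⟩ := hpts_mem z' hv
          rcases Finset.mem_union.mp hvB with h3 | h3
          · have : a i ∈ A := by
              rw [← hpts_orb z' i, ← hYs1 s]
              exact mem_under.mpr ⟨_, h3, rfl⟩
            exact absurd this (hnotin i)
          · exact h3
      have hz' : ∀ i, γ • z i = z' i := by
        intro i
        have hmem1 : γ • (Quotient.out (z i) • x i) ∈ pts z' := by
          rw [← hptseq]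
          exact Finset.smul_mem_smul_finset (Finset.mem_image_of_mem _ (Finset.mem_univ i))
        obtain ⟨j, hj⟩ := hpts_mem z' hmem1
        have horbj : a j = a i := by
          rw [← hpts_orb z' j, ← hj, orbOf_smul, hpts_orb]
        have hij : j = i := hinj horbj
        subst hij
        have hpt2 : (γ * Quotient.out (z j)) • x j = Quotient.out (z' j) • x j := by
          rw [mul_smul]
          exact hj
        have hcos := coset_eq_of_point_eq hpt2
        calc γ • z j = ↑(γ * Quotient.out (z j)) := by
              conv_lhs => rw [← QuotientGroup.out_eq' (z j)]
              rw [MulAction.Quotient.smul_mk, smul_eq_mul]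
          _ = z' j := by rw [hcos, QuotientGroup.out_eq']
      refine Prod.ext rfl ?_
      refine Quotient.sound' (MulAction.mem_orbit_iff.mpr ⟨(⟨γ, hγH⟩ : H)⁻¹, ?_⟩)
      funext i
      show (γ⁻¹ : G) • z' i = z i
      rw [← hz' i, inv_smul_smul]
    · -- surjectivity
      rintro ⟨O, ⟨W, hWu, hWq⟩⟩
      have hφC : W.1.filter (fun w => orbOf G w ∈ A) ∈ M.C :=
        M.downClosed W.2 (Finset.filter_subset _ _)
      have hdisj : ∀ β ∈ Set.range a, β ∉ A := by
        rintro β ⟨i, rfl⟩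
        exact hnotin i
      have hφu : under G (W.1.filter (fun w => orbOf G w ∈ A)) = A :=
        under_filter hdisj hWu
      let s₀ : SA := ⟨Quot.mk M.cenRel ⟨_, hφC⟩, ⟨⟨_, hφC⟩, hφu, rfl⟩⟩
      obtain ⟨γ', hγ'⟩ := cenRel_iff.mp (cen_quot_eq.mp (hYs2 s₀))
      have hγ'' : γ' • (Ys s₀).1 = W.1.filter (fun w => orbOf G w ∈ A) := hγ'
      have hγφ : γ'⁻¹ • (W.1.filter (fun w => orbOf G w ∈ A)) = (Ys s₀).1 := by
        rw [← hγ'', inv_smul_smul]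
      have hW'C : γ'⁻¹ • W.1 ∈ M.C := smul_finset_mem_C _ W.2
      have hW'u : under G (γ'⁻¹ • W.1) = B := (under_smul _ _).trans hWu
      have hφW' : (γ'⁻¹ • W.1).filter (fun w => orbOf G w ∈ A) = (Ys s₀).1 := by
        rw [filter_smul, hγφ]
      have hptex : ∀ i : Fin k, ∃ w ∈ γ'⁻¹ • W.1, orbOf G w = a i := by
        intro i
        have : a i ∈ under G (γ'⁻¹ • W.1) := by
          rw [hW'u]
          exact Or.inr ⟨i, rfl⟩
        exact mem_under.mp this
      choose pt hptW hptorb using hptex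
      have hgex : ∀ i, ∃ g : G, g • x i = pt i := by
        intro i
        refine orbOf_eq_iff.mp ?_
        rw [hptorb i, ← hx i]
      choose g hgpt using hgex
      let z : Z := fun i => (↑(g i) : G ⧸ MulAction.stabilizer G (x i))
      refine ⟨(s₀, Quotient.mk _ z), ?_⟩
      refine Subtype.ext ?_
      show (F0 s₀ z).1 = O
      have hptsz : pts z = Finset.image pt Finset.univ := by
        refine Finset.image_congr (fun i _ => ?_)
        show Quotient.out (z i) • x i = pt i
        rw [out_smul_point _ _ rfl, hgpt i]
      have hWdec : (Ys s₀).1 ∪ pts z = γ'⁻¹ • W.1 := by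
        rw [hptsz, ← hφW']
        ext w
        simp only [Finset.mem_union, Finset.mem_filter, Finset.mem_image]
        constructor
        · rintro (⟨h1, _⟩ | ⟨i, _, rfl⟩)
          · exact h1
          · exact hptW i
        · intro hw
          have horbw : orbOf G w ∈ B := by
            rw [← hW'u]
            exact mem_under.mpr ⟨w, hw, rfl⟩
          rcases horbw with h1 | ⟨i, hi⟩
          · exact Or.inl ⟨hw, h1⟩
          · exact Or.inr ⟨i, Finset.mem_univ i,
              eq_of_orb_eq htr hW'C (hptW i) hw (by rw [hptorb i, hi])⟩
      have hfin : Quot.mk M.cenRel (⟨(Ys s₀).1 ∪ pts z, hmemU s₀ z⟩ : M.Cen)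
          = Quot.mk M.cenRel W := by
        refine cen_quot_eq.mpr (cenRel_iff.mpr ⟨γ', ?_⟩)
        show γ' • ((Ys s₀).1 ∪ pts z) = W.1
        rw [hWdec]
        exact smul_inv_smul γ' W.1
      exact hfin.trans hWq
  have hmB : M.m B = Nat.card SB := rfl
  have hmA : M.m A = Nat.card SA := rfl
  rw [hmB, hmA, Nat.card_congr (Equiv.ofBijective Fwd hbij).symm, Nat.card_prod,
    Nat.card_congr (orbitQuotProdEquiv H Z).symm]
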